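/- An integral domain D is a (∗,v)-CICD if and only if D is a (∗,v)-multiplication domain. -/

import Mathlib

open FractionalIdeal

/-- A star operation on an integral domain `D` with fraction field `K`, acting on
fractional ideals: it fixes `D`, is extensive, monotone, idempotent (all on nonzero
ideals), and commutes with multiplication by nonzero principal fractional ideals. -/
structure StarOp (D : Type*) [CommRing D] [IsDomain D] (K : Type*) [Field K]
    [Algebra D K] [IsFractionRing D K] where
  star : FractionalIdeal (nonZeroDivisors D) K → FractionalIdeal (nonZeroDivisors D) K
  star_one : star 1 = 1
  le_star : ∀ {A}, A ≠ 0 → A ≤ star A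
  star_mono : ∀ {A B}, A ≠ 0 → A ≤ B → star A ≤ star B
  star_idem : ∀ {A}, A ≠ 0 → star (star A) = star A
  star_smul : ∀ {A : FractionalIdeal (nonZeroDivisors D) K} (x : K), x ≠ 0 → A ≠ 0 →
    star (spanSingleton (nonZeroDivisors D) x * A) = spanSingleton (nonZeroDivisors D) x * star A

variable {D K : Type*} [CommRing D] [IsDomain D] [Field K] [Algebra D K] [IsFractionRing D K]

namespace StarOpAux

lemma exists_mem_ne_zero {I : FractionalIdeal (nonZeroDivisors D) K} (h : I ≠ 0) :
    ∃ y ∈ I, y ≠ (0 : K) := by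
  by_contra hc
  push_neg at hc
  exact h (eq_zero_iff.mpr hc)

lemma mul_ne_zero' {I J : FractionalIdeal (nonZeroDivisors D) K} (hI : I ≠ 0) (hJ : J ≠ 0) :
    I * J ≠ 0 := by
  obtain ⟨y, hy, hy0⟩ := exists_mem_ne_zero hI
  obtain ⟨z, hz, hz0⟩ := exists_mem_ne_zero hJ
  intro h0
  exact mul_ne_zero hy0 hz0 (eq_zero_iff.mp h0 _ (mul_mem_mul hy hz))

lemma inv_ne_zero' {I : FractionalIdeal (nonZeroDivisors D) K} (hI : I ≠ 0) : I⁻¹ ≠ 0 := by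
  intro h0
  have := bot_lt_mul_inv (I := I) (by simpa using hI)
  rw [h0, mul_zero] at this
  simp at this

lemma star_ne_zero (s : StarOp D K) {A : FractionalIdeal (nonZeroDivisors D) K} (hA : A ≠ 0) :
    s.star A ≠ 0 := by
  intro h0
  exact hA (le_antisymm (h0 ▸ s.le_star hA) (zero_le A))

lemma mul_star_le (s : StarOp D K) {A B : FractionalIdeal (nonZeroDivisors D) K}
    (hA : A ≠ 0) (hB : B ≠ 0) : A * s.star B ≤ s.star (A * B) := by
  rw [mul_le]
  intro i hi j hj
  by_cases hi0 : i = 0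
  · rw [hi0, zero_mul]; exact zero_mem _
  have h1 : spanSingleton (nonZeroDivisors D) i * B ≤ A * B :=
    mul_le_mul_left (spanSingleton_le_iff_mem.mpr hi) B
  have h2 := s.star_mono (mul_ne_zero' (spanSingleton_ne_zero_iff.mpr hi0) hB) h1
  rw [s.star_smul i hi0 hB] at h2
  exact h2 (mul_mem_mul (mem_spanSingleton_self _ i) hj)

lemma star_mul_star (s : StarOp D K) {A B : FractionalIdeal (nonZeroDivisors D) K}
    (hA : A ≠ 0) (hB : B ≠ 0) : s.star (A * s.star B) = s.star (A * B) := by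
  refine le_antisymm ?_ (s.star_mono (mul_ne_zero' hA hB)
    (mul_le_mul_right (s.le_star hB) A))
  have h1 := s.star_mono (mul_ne_zero' hA (star_ne_zero s hB)) (mul_star_le s hA hB)
  rwa [s.star_idem (mul_ne_zero' hA hB)] at h1

lemma le_inv_inv {A : FractionalIdeal (nonZeroDivisors D) K} (hA : A ≠ 0) : A ≤ (A⁻¹)⁻¹ := by
  rw [inv_eq, inv_eq, le_div_iff_mul_le (by simpa [inv_eq] using inv_ne_zero' hA)]
  exact mul_one_div_le_one

lemma inv_antitone {A B : FractionalIdeal (nonZeroDivisors D) K} (hA : A ≠ 0) (h : A ≤ B) :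
    B⁻¹ ≤ A⁻¹ := by
  rw [inv_eq, inv_eq, le_div_iff_mul_le hA]
  calc (1 / B) * A ≤ (1 / B) * B := mul_le_mul_right h _
  _ = B * (1 / B) := mul_comm _ _
  _ ≤ 1 := mul_one_div_le_one

lemma inv_inv_inv {A : FractionalIdeal (nonZeroDivisors D) K} (hA : A ≠ 0) :
    ((A⁻¹)⁻¹)⁻¹ = A⁻¹ :=
  le_antisymm (inv_antitone hA (le_inv_inv hA)) (le_inv_inv (inv_ne_zero' hA))

end StarOpAux

open StarOpAux

/-- `D` is a `(∗,v)`-CICD iff `D` is a `(∗,v)`-multiplication domain. -/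
theorem starVCICD_iff_starVMultiplication (s : StarOp D K) :
    (∀ A : FractionalIdeal (nonZeroDivisors D) K, A ≠ 0 → s.star ((A⁻¹)⁻¹ * A⁻¹) = 1) ↔
    (∀ A B : FractionalIdeal (nonZeroDivisors D) K, A ≠ 0 → B ≠ 0 → s.star A ≤ (B⁻¹)⁻¹ →
      ∃ C : FractionalIdeal (nonZeroDivisors D) K, C ≠ 0 ∧ s.star A = s.star ((B⁻¹)⁻¹ * C)) := by
  constructor
  · intro hc A B hA hB _
    have hBi : B⁻¹ ≠ 0 := inv_ne_zero' hB
    have hBv : (B⁻¹)⁻¹ ≠ 0 := inv_ne_zero' hBi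
    have hsA : s.star A ≠ 0 := star_ne_zero s hA
    refine ⟨B⁻¹ * s.star A, mul_ne_zero' hBi hsA, ?_⟩
    have hW : (B⁻¹)⁻¹ * B⁻¹ ≠ 0 := mul_ne_zero' hBv hBi
    calc s.star A = s.star (1 * A) := by rw [one_mul]
    _ = s.star (s.star ((B⁻¹)⁻¹ * B⁻¹) * A) := by rw [hc B hB]
    _ = s.star (A * s.star ((B⁻¹)⁻¹ * B⁻¹)) := by rw [mul_comm]
    _ = s.star (A * ((B⁻¹)⁻¹ * B⁻¹)) := star_mul_star s hA hW
    _ = s.star (((B⁻¹)⁻¹ * B⁻¹) * A) := by rw [mul_comm]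
    _ = s.star (((B⁻¹)⁻¹ * B⁻¹) * s.star A) := (star_mul_star s hW hA).symm
    _ = s.star ((B⁻¹)⁻¹ * (B⁻¹ * s.star A)) := by rw [mul_assoc]
  · intro hm A hA
    have hAi : A⁻¹ ≠ 0 := inv_ne_zero' hA
    have hAv : (A⁻¹)⁻¹ ≠ 0 := inv_ne_zero' hAi
    obtain ⟨d, hdA, hd0⟩ := exists_mem_ne_zero hA
    have hsd : spanSingleton (nonZeroDivisors D) d ≠ 0 := spanSingleton_ne_zero_iff.mpr hd0
    have hstar_d : s.star (spanSingleton (nonZeroDivisors D) d) =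
        spanSingleton (nonZeroDivisors D) d := by
      have := s.star_smul (A := 1) d hd0 one_ne_zero
      rwa [mul_one, s.star_one, mul_one] at this
    have hdle : s.star (spanSingleton (nonZeroDivisors D) d) ≤ (A⁻¹)⁻¹ := by
      rw [hstar_d]
      exact spanSingleton_le_iff_mem.mpr (le_inv_inv hA hdA)
    obtain ⟨C, hC, hCeq⟩ := hm (spanSingleton (nonZeroDivisors D) d) A hsd hA hdle
    rw [hstar_d] at hCeq
    -- Av * C ≤ span d
    have hAvC : (A⁻¹)⁻¹ * C ≠ 0 := mul_ne_zero' hAv hC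
    have h1 : (A⁻¹)⁻¹ * C ≤ spanSingleton (nonZeroDivisors D) d := by
      rw [hCeq]; exact s.le_star hAvC
    -- C' := span d⁻¹ * C ≤ A⁻¹
    set C' : FractionalIdeal (nonZeroDivisors D) K := spanSingleton (nonZeroDivisors D) d⁻¹ * C
      with hC'def
    have hsdi : spanSingleton (nonZeroDivisors D) d⁻¹ ≠ 0 :=
      spanSingleton_ne_zero_iff.mpr (inv_ne_zero hd0)
    have hC'0 : C' ≠ 0 := mul_ne_zero' hsdi hC
    have hC'le : C' ≤ A⁻¹ := by
      rw [← inv_inv_inv hA, inv_eq, le_div_iff_mul_le hAv]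
      calc C' * (A⁻¹)⁻¹ = spanSingleton (nonZeroDivisors D) d⁻¹ * ((A⁻¹)⁻¹ * C) := by ring
      _ ≤ spanSingleton (nonZeroDivisors D) d⁻¹ * spanSingleton (nonZeroDivisors D) d :=
        mul_le_mul_right h1 _
      _ = 1 := by
        rw [spanSingleton_mul_spanSingleton, inv_mul_cancel₀ hd0, spanSingleton_one]
    have hCrec : C = spanSingleton (nonZeroDivisors D) d * C' := by
      rw [hC'def, ← mul_assoc, spanSingleton_mul_spanSingleton, mul_inv_cancel₀ hd0,
        spanSingleton_one, one_mul]
    -- star(Av * A⁻¹) ≤ 1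
    have hJ : (A⁻¹)⁻¹ * A⁻¹ ≠ 0 := mul_ne_zero' hAv hAi
    have hJle1 : (A⁻¹)⁻¹ * A⁻¹ ≤ 1 := by
      have : (A⁻¹)⁻¹ * ((A⁻¹)⁻¹)⁻¹ ≤ 1 := by
        rw [inv_eq (I := (A⁻¹)⁻¹)]; exact mul_one_div_le_one
      rwa [inv_inv_inv hA] at this
    have hupper : s.star ((A⁻¹)⁻¹ * A⁻¹) ≤ 1 := by
      have := s.star_mono hJ hJle1
      rwa [s.star_one] at this
    -- span d ≤ span d * star(Av * A⁻¹)
    have hlow : spanSingleton (nonZeroDivisors D) d ≤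
        spanSingleton (nonZeroDivisors D) d * s.star ((A⁻¹)⁻¹ * A⁻¹) := by
      calc spanSingleton (nonZeroDivisors D) d = s.star ((A⁻¹)⁻¹ * C) := hCeq
      _ ≤ s.star ((A⁻¹)⁻¹ * (spanSingleton (nonZeroDivisors D) d * A⁻¹)) := by
        refine s.star_mono hAvC (mul_le_mul_right ?_ _)
        rw [hCrec]
        exact mul_le_mul_right hC'le _
      _ = s.star (spanSingleton (nonZeroDivisors D) d * ((A⁻¹)⁻¹ * A⁻¹)) := by ring_nf
      _ = spanSingleton (nonZeroDivisors D) d * s.star ((A⁻¹)⁻¹ * A⁻¹) :=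
        s.star_smul d hd0 hJ
    have h1le : 1 ≤ s.star ((A⁻¹)⁻¹ * A⁻¹) := by
      have := mul_le_mul_right hlow (spanSingleton (nonZeroDivisors D) d⁻¹)
      rwa [← mul_assoc, spanSingleton_mul_spanSingleton, inv_mul_cancel₀ hd0,
        spanSingleton_one, one_mul] at this
    exact le_antisymm hupper h1le
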